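/- Let m be a natural number, s_0,…,s_m ∈ ℂ support points, w_0,…,w_m ∈ ℂ barycentric weights, and ν a natural number with ν ≤ m. Suppose ∑_{k=0}^m w_k s_k^l = 0 for every natural number l < ν, and ∑_{k=0}^m w_k s_k^ν ≠ 0. Then the denominator polynomial q = ∑_{k=0}^m w_k · ∏_{j≠k} (X − s_j) ∈ ℂ[X] is nonzero, has degree exactly m − ν, and its leading coefficient equals ∑_{k=0}^m w_k s_k^ν. -/
import Mathlib

open Polynomial

lemma coeff_X_sub_C_mul' (a : ℂ) (p : Polynomial ℂ) (n : ℕ) :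
    ((X - C a) * p).coeff (n + 1) = p.coeff n - a * p.coeff (n + 1) := by
  rw [sub_mul, coeff_sub, coeff_X_mul, coeff_C_mul]

lemma prod_monic (t : Finset ℕ) (s : ℕ → ℂ) :
    (∏ j ∈ t, (X - C (s j))).Monic :=
  monic_prod_of_monic _ _ fun j _ => monic_X_sub_C (s j)

lemma prod_natDegree (t : Finset ℕ) (s : ℕ → ℂ) :
    (∏ j ∈ t, (X - C (s j))).natDegree = t.card := by
  rw [natDegree_prod_of_monic _ _ fun j _ => monic_X_sub_C (s j)]
  simp

lemma key_coeff (m : ℕ) (s : ℕ → ℂ) (k : ℕ) (hk : k ∈ Finset.range (m + 1)) :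
    ∀ l ≤ m, (∏ j ∈ (Finset.range (m + 1)).erase k, (X - C (s j))).coeff (m - l)
      = ∑ i ∈ Finset.range (l + 1),
          s k ^ i * (∏ j ∈ Finset.range (m + 1), (X - C (s j))).coeff (m + 1 - l + i) := by
  set Pk := ∏ j ∈ (Finset.range (m + 1)).erase k, (X - C (s j)) with hPk
  set P := ∏ j ∈ Finset.range (m + 1), (X - C (s j)) with hP
  have hcard : ((Finset.range (m + 1)).erase k).card = m := by
    rw [Finset.card_erase_of_mem hk, Finset.card_range]
    omega
  have hPkdeg : Pk.natDegree = m := by rw [hPk, prod_natDegree, hcard]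
  have hPdeg : P.natDegree = m + 1 := by rw [hP, prod_natDegree, Finset.card_range]
  have hfac : P = (X - C (s k)) * Pk := by
    rw [hP, hPk]; exact (Finset.mul_prod_erase _ _ hk).symm
  intro l
  induction l with
  | zero =>
    intro _
    have h1 : Pk.coeff m = 1 := by
      have := (prod_monic _ s : Pk.Monic)
      rw [← hPkdeg]; exact this.coeff_natDegree
    have h2 : P.coeff (m + 1) = 1 := by
      have := (prod_monic _ s : P.Monic)
      rw [← hPdeg]; exact this.coeff_natDegree
    simp [h1, h2]
  | succ l ih =>
    intro hl
    have hl' : l ≤ m := Nat.le_of_succ_le hl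
    have ihl := ih hl'
    have hml : m - l = (m - (l + 1)) + 1 := by omega
    have hrec : Pk.coeff (m - (l + 1)) = P.coeff (m - l) + s k * Pk.coeff (m - l) := by
      have := coeff_X_sub_C_mul' (s k) Pk (m - (l + 1))
      rw [← hml] at this
      rw [← hfac] at this
      linear_combination -this
    rw [hrec, ihl, Finset.mul_sum]
    conv_rhs => rw [Finset.sum_range_succ']
    have e0 : m + 1 - (l + 1) + 0 = m - l := by omega
    rw [e0, pow_zero, one_mul]
    have hcong : ∀ i ∈ Finset.range (l + 1),
        s k ^ (i + 1) * P.coeff (m + 1 - (l + 1) + (i + 1))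
          = s k * (s k ^ i * P.coeff (m + 1 - l + i)) := by
      intro i _
      have : m + 1 - (l + 1) + (i + 1) = m + 1 - l + i := by omega
      rw [this, pow_succ]
      ring
    rw [Finset.sum_congr rfl hcong, add_comm]

/-- Denominator half of the forward direction of the paper's Theorem 3.2. -/
theorem denominator_exact_degree (m : ℕ) (s w : ℕ → ℂ) (ν : ℕ) (hν : ν ≤ m)
    (h0 : ∀ l < ν, ∑ k ∈ Finset.range (m + 1), w k * s k ^ l = 0)
    (hne : ∑ k ∈ Finset.range (m + 1), w k * s k ^ ν ≠ 0)
    (q : Polynomial ℂ)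
    (hq : q = ∑ k ∈ Finset.range (m + 1),
      C (w k) * ∏ j ∈ (Finset.range (m + 1)).erase k, (X - C (s j))) :
    q ≠ 0 ∧ q.natDegree = m - ν ∧
      q.leadingCoeff = ∑ k ∈ Finset.range (m + 1), w k * s k ^ ν := by
  set P := ∏ j ∈ Finset.range (m + 1), (X - C (s j)) with hP
  have hPdeg : P.natDegree = m + 1 := by rw [hP, prod_natDegree, Finset.card_range]
  -- coefficient formula
  have hcoeff : ∀ l ≤ m, q.coeff (m - l)
      = ∑ i ∈ Finset.range (l + 1),
          (∑ k ∈ Finset.range (m + 1), w k * s k ^ i) * P.coeff (m + 1 - l + i) := by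
    intro l hl
    rw [hq, finset_sum_coeff]
    have : ∀ k ∈ Finset.range (m + 1),
        (C (w k) * ∏ j ∈ (Finset.range (m + 1)).erase k, (X - C (s j))).coeff (m - l)
          = ∑ i ∈ Finset.range (l + 1), w k * s k ^ i * P.coeff (m + 1 - l + i) := by
      intro k hk
      rw [coeff_C_mul, key_coeff m s k hk l hl, Finset.mul_sum]
      exact Finset.sum_congr rfl fun i _ => by ring
    rw [Finset.sum_congr rfl this, Finset.sum_comm]
    exact Finset.sum_congr rfl fun i _ => by rw [← Finset.sum_mul]
  -- degree bound: natDegree q ≤ m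
  have hdegle : q.natDegree ≤ m := by
    rw [hq]
    refine Polynomial.natDegree_sum_le_of_forall_le _ _ fun k hk => ?_
    calc (C (w k) * ∏ j ∈ (Finset.range (m + 1)).erase k, (X - C (s j))).natDegree
        ≤ (C (w k)).natDegree
          + (∏ j ∈ (Finset.range (m + 1)).erase k, (X - C (s j))).natDegree :=
          natDegree_mul_le
      _ ≤ m := by
          rw [natDegree_C, prod_natDegree, Finset.card_erase_of_mem hk, Finset.card_range]
          simp
  -- vanishing coefficients above m - ν
  have hvanish : ∀ d, m - ν < d → q.coeff d = 0 := by
    intro d hd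
    by_cases hdm : d ≤ m
    · have hl : m - d < ν := by omega
      have hd' : d = m - (m - d) := by omega
      rw [hd', hcoeff (m - d) (by omega)]
      refine Finset.sum_eq_zero fun i hi => ?_
      have : i < ν := by
        simp only [Finset.mem_range] at hi; omega
      rw [h0 i this, zero_mul]
    · exact coeff_eq_zero_of_natDegree_lt (lt_of_le_of_lt hdegle (by omega))
  -- the coefficient at m - ν
  have hPtop : P.coeff (m + 1) = 1 := by
    have := (prod_monic _ s : P.Monic)
    rw [← hPdeg]; exact this.coeff_natDegree
  have hcν : q.coeff (m - ν) = ∑ k ∈ Finset.range (m + 1), w k * s k ^ ν := by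
    rw [hcoeff ν hν, Finset.sum_range_succ]
    have e1 : m + 1 - ν + ν = m + 1 := by omega
    rw [e1, hPtop, mul_one]
    have : ∀ i ∈ Finset.range ν,
        (∑ k ∈ Finset.range (m + 1), w k * s k ^ i) * P.coeff (m + 1 - ν + i) = 0 := by
      intro i hi
      rw [h0 i (Finset.mem_range.mp hi), zero_mul]
    rw [Finset.sum_congr rfl this]
    simp
  have hqne : q ≠ 0 := fun h => hne (by rw [← hcν, h, coeff_zero])
  have hdeg : q.natDegree = m - ν := by
    have h1 : q.natDegree ≤ m - ν := natDegree_le_iff_coeff_eq_zero.mpr hvanish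
    have h2 : m - ν ≤ q.natDegree :=
      le_natDegree_of_ne_zero (by rw [hcν]; exact hne)
    omega
  exact ⟨hqne, hdeg, by rw [leadingCoeff, hdeg, hcν]⟩
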